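/- There is no ℤ/2ℤ-equivariant unital *-homomorphism from C(S¹) (with the antipodal action) to the free sphere algebra C(S¹_+); consequently the strong local-triviality dimension of the antipodal ℤ/2ℤ-action on C(S¹_+) is at least 2. -/

import Mathlib

noncomputable section
open Complex Finset
namespace BU

/-- clamp to [0,1] -/
def proj (x : ℝ) : ℝ := max 0 (min 1 x)

lemma proj_mem (x : ℝ) : proj x ∈ Set.Icc (0:ℝ) 1 := by
  constructor
  · exact le_max_left _ _
  · simp only [proj, max_le_iff]
    exact ⟨zero_le_one, min_le_left _ _⟩

lemma proj_of_mem {x : ℝ} (hx : x ∈ Set.Icc (0:ℝ) 1) : proj x = x := by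
  simp only [proj]
  rw [min_eq_right hx.2, max_eq_right hx.1]

lemma proj_idem (x : ℝ) : proj (proj x) = proj x := proj_of_mem (proj_mem x)

lemma proj_lipschitz (x y : ℝ) : |proj x - proj y| ≤ |x - y| := by
  have h1 : |proj x - proj y| ≤ |min 1 x - min 1 y| := by
    rw [proj, proj, max_comm 0 (min 1 x), max_comm 0 (min 1 y)]
    exact abs_max_sub_max_le_abs _ _ _
  refine h1.trans ?_
  calc |min 1 x - min 1 y| ≤ max |(1:ℝ) - 1| |x - y| := abs_min_sub_min_le_max 1 x 1 y
  _ = |x - y| := by simp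

/-- exp-difference constancy on an interval -/
lemma const_of_exp_const {d : ℝ → ℂ} (hd : Continuous d) {c : ℂ} {a b : ℝ}
    (h : ∀ x ∈ Set.uIcc a b, Complex.exp (d x) = c) : d a = d b := by
  have ha : Complex.exp (d a) = c := h a Set.left_mem_uIcc
  -- the integer part function
  have key : ∀ x ∈ Set.uIcc a b, ∃ n : ℤ, d x - d a = n * (2 * Real.pi * I) := by
    intro x hx
    obtain ⟨n, hn⟩ := exp_eq_exp_iff_exists_int.mp ((h x hx).trans ha.symm)
    exact ⟨n, by rw [hn]; ring⟩
  set r : ℝ → ℝ := fun x => (d x - d a).im / (2 * Real.pi) with hr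
  have hrc : Continuous r := (Complex.continuous_im.comp (hd.sub continuous_const)).div_const _
  have hint : ∀ x ∈ Set.uIcc a b, ∃ n : ℤ, r x = n := by
    intro x hx
    obtain ⟨n, hn⟩ := key x hx
    refine ⟨n, ?_⟩
    rw [hr]
    simp only [hn]
    have : ((n : ℂ) * (2 * Real.pi * I)).im = n * (2 * Real.pi) := by
      simp [Complex.mul_im]
    rw [this, mul_div_cancel_right₀]
    positivity
  have hra : r a = 0 := by simp [hr]
  have hrb : r b = 0 := by
    by_contra hne
    obtain ⟨nb, hnb⟩ := hint b Set.right_mem_uIcc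
    have hnb0 : nb ≠ 0 := by rintro rfl; exact hne (by simp [hnb])
    have h1 : (1:ℝ) ≤ |(nb:ℝ)| := by exact_mod_cast Int.one_le_abs (by omega)
    -- midpoint value (nb/2)·sign -- use value r b / 2? no: use (sign nb)/2; it's between 0 and nb
    have hmem : (if (0:ℝ) < nb then (1:ℝ)/2 else -(1/2)) ∈ Set.uIcc (r a) (r b) := by
      rw [hra, hnb]
      rcases lt_or_ge (0:ℝ) (nb:ℝ) with hpos | hneg
      · simp only [if_pos hpos]
        exact Set.mem_uIcc.mpr (Or.inl ⟨by norm_num, by rw [abs_of_pos hpos] at h1; linarith⟩)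
      · simp only [if_neg (not_lt.mpr hneg)]
        refine Set.mem_uIcc.mpr (Or.inr ⟨?_, by norm_num⟩)
        rw [abs_of_nonpos hneg] at h1; linarith
    obtain ⟨x, hx, hxe⟩ := intermediate_value_uIcc (f := r) (hrc.continuousOn) hmem
    obtain ⟨n, hn⟩ := hint x hx
    rw [hn] at hxe
    rcases lt_or_ge (0:ℝ) (nb:ℝ) with hpos | hneg
    · rw [if_pos hpos] at hxe
      have : (2*n : ℝ) = 1 := by linarith
      have : (2*n : ℤ) = 1 := by exact_mod_cast this
      omega
    · rw [if_neg (not_lt.mpr hneg)] at hxe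
      have : (2*n : ℝ) = -1 := by linarith
      have : (2*n : ℤ) = -1 := by exact_mod_cast this
      omega
  obtain ⟨nb, hnb⟩ := key b Set.right_mem_uIcc
  have : (nb : ℝ) = 0 := by
    have := hrb
    rw [hr] at this
    simp only [hnb] at this
    have h2 : ((nb : ℂ) * (2 * Real.pi * I)).im = nb * (2 * Real.pi) := by simp [Complex.mul_im]
    rw [h2, mul_div_cancel_right₀] at this
    · exact this
    · positivity
  have : nb = 0 := by exact_mod_cast this
  rw [this] at hnb
  simp only [Int.cast_zero, zero_mul] at hnb
  exact (sub_eq_zero.mp hnb).symm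


lemma prod_telescope {G : ℕ → ℂ} (hG : ∀ j, G j ≠ 0) (n : ℕ) :
    ∏ j ∈ range n, G (j+1) / G j = G n / G 0 := by
  induction n with
  | zero => simp [div_self (hG 0)]
  | succ n ih =>
    rw [Finset.prod_range_succ, ih, div_mul_div_comm, mul_comm (G 0) (G n),
      mul_div_mul_left _ _ (hG n)]

lemma re_pos_of_close {r : ℂ} (hn : ‖r‖ = 1) (hc : ‖r - 1‖ < 1) : 0 < r.re := by
  have e1 : ‖r - 1‖^2 = (r.re - 1)^2 + r.im^2 := by
    rw [Complex.sq_norm, Complex.normSq_apply, Complex.sub_re,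
      Complex.sub_im]
    simp; ring
  have e2 : r.re^2 + r.im^2 = 1 := by
    have : ‖r‖^2 = 1 := by rw [hn]; norm_num
    rw [Complex.sq_norm, Complex.normSq_apply] at this
    nlinarith [this]
  nlinarith [sq_nonneg (‖r-1‖), hc, norm_nonneg (r-1), e1, e2]

/-- ratio of two unimodular close values is in the slit plane -/
lemma ratio_slit {z w : ℂ} (hz : ‖z‖ = 1) (hw : ‖w‖ = 1) (hc : ‖z - w‖ < 1) :
    z / w ∈ slitPlane ∧ ‖z / w‖ = 1 ∧ w ≠ 0 := by
  have hw0 : w ≠ 0 := by intro h; rw [h] at hw; simp at hw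
  have hnorm : ‖z / w‖ = 1 := by rw [norm_div, hz, hw]; norm_num
  have hclose : ‖z / w - 1‖ < 1 := by
    have : z / w - 1 = (z - w) / w := by field_simp
    rw [this, norm_div, hw, div_one]
    exact hc
  exact ⟨Or.inl (re_pos_of_close hnorm hclose), hnorm, hw0⟩

/-- Existence of a continuous logarithm for clamped unimodular functions. -/
lemma lift_exists {f : ℝ → ℂ} (hc : Continuous f) (hnorm : ∀ x, ‖f x‖ = 1)
    (hclamp : ∀ x, f x = f (proj x)) :
    ∃ L : ℝ → ℂ, Continuous L ∧ ∀ x, Complex.exp (L x) = f x := by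
  have hf0 : ∀ x, f x ≠ 0 := fun x h => by have := hnorm x; rw [h] at this; simp at this
  obtain ⟨δ, hδ0, hδ⟩ : ∃ δ > 0, ∀ x y : ℝ, |x - y| ≤ δ → ‖f x - f y‖ < 1 := by
    have huc : UniformContinuousOn f (Set.Icc 0 1) :=
      (isCompact_Icc).uniformContinuousOn_of_continuous hc.continuousOn
    rw [Metric.uniformContinuousOn_iff] at huc
    obtain ⟨δ, hδ0, hδ⟩ := huc 1 one_pos
    refine ⟨δ/2, by positivity, fun x y hxy => ?_⟩
    have h1 : dist (proj x) (proj y) < δ := by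
      rw [Real.dist_eq]
      calc |proj x - proj y| ≤ |x - y| := proj_lipschitz x y
      _ ≤ δ/2 := hxy
      _ < δ := by linarith
    have := hδ (proj x) (proj_mem x) (proj y) (proj_mem y) h1
    rw [hclamp x, hclamp y]
    simpa [dist_eq_norm] using this
  obtain ⟨n, hn⟩ := exists_nat_one_div_lt hδ0
  set N : ℕ := n + 1 with hN
  have hNpos : (0:ℝ) < N := by rw [hN]; push_cast; positivity
  have hNR : (1:ℝ)/N ≤ δ := by rw [hN]; push_cast; push_cast at hn; exact le_of_lt hn
  set c : ℕ → ℝ → ℝ := fun j x => min x ((j:ℝ)/N) with hcdef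
  have hstep : ∀ (j : ℕ) (x : ℝ), |c (j+1) x - c j x| ≤ 1/N := by
    intro j x
    have heq : |((j:ℝ)+1)/N - (j:ℝ)/N| = 1/N := by
      rw [div_sub_div_same]
      rw [show (j:ℝ) + 1 - j = 1 by ring]
      rw [abs_of_pos (by positivity)]
    calc |c (j+1) x - c j x| = |min x (((j:ℝ)+1)/(N:ℝ)) - min x ((j:ℝ)/(N:ℝ))| := by
          simp only [hcdef]
          norm_num
      _ ≤ max |x - x| |((j:ℝ)+1)/(N:ℝ) - (j:ℝ)/(N:ℝ)| := abs_min_sub_min_le_max _ _ _ _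
      _ = 1/(N:ℝ) := by
          rw [sub_self, abs_zero, heq]
          exact max_eq_right (by positivity)
  have hclose : ∀ (j : ℕ) (x : ℝ), ‖f (c (j+1) x) - f (c j x)‖ < 1 := by
    intro j x
    exact hδ _ _ ((hstep j x).trans hNR)
  have hcc : ∀ j : ℕ, Continuous (fun x => c j x) :=
    fun j => continuous_id.min continuous_const
  set L : ℝ → ℂ := fun x => Complex.log (f 0) +
      ∑ j ∈ range N, Complex.log (f (c (j+1) x) / f (c j x)) with hL
  have hratio : ∀ (j : ℕ) (x : ℝ), f (c (j+1) x) / f (c j x) ∈ slitPlane ∧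
      ‖f (c (j+1) x) / f (c j x)‖ = 1 ∧ f (c j x) ≠ 0 :=
    fun j x => ratio_slit (hnorm _) (hnorm _) (hclose j x)
  refine ⟨L, ?_, ?_⟩
  · refine continuous_const.add (continuous_finset_sum _ fun j _ => ?_)
    have hq : Continuous (fun x => f (c (j+1) x) / f (c j x)) :=
      ((hc.comp (hcc (j+1))).div (hc.comp (hcc j)) (fun x => (hratio j x).2.2))
    rw [continuous_iff_continuousAt]
    intro x
    exact ContinuousAt.clog hq.continuousAt (hratio j x).1
  · intro x
    rw [hL]
    rw [Complex.exp_add, Complex.exp_sum]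
    have hterm : ∀ j ∈ range N, Complex.exp (Complex.log (f (c (j+1) x) / f (c j x))) =
        f (c (j+1) x) / f (c j x) := by
      intro j _
      exact Complex.exp_log (div_ne_zero (hf0 _) (hf0 _))
    rw [Finset.prod_congr rfl hterm, Complex.exp_log (hf0 0),
      prod_telescope (fun j => hf0 (c j x)) N]
    have hcN : c N x = min x 1 := by
      simp only [hcdef]
      rw [div_self (ne_of_gt hNpos)]
    have hc0 : c 0 x = min x 0 := by
      simp only [hcdef]
      norm_num
    rw [hcN, hc0]
    rcases le_or_gt 0 x with hx | hx
    · rw [min_eq_right hx]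
      have : f (min x 1) = f x := by
        rw [hclamp x]
        congr 1
        rw [proj, min_comm, max_eq_right (le_min zero_le_one hx)]
      rw [this, mul_comm, div_mul_cancel₀ _ (hf0 0)]
    · have hx1 : min x (1:ℝ) = x := min_eq_left (by linarith)
      have hx0 : min x (0:ℝ) = x := min_eq_left (by linarith)
      rw [hx1, hx0, div_self (hf0 x), mul_one]
      rw [hclamp x]
      congr 1
      rw [proj, min_eq_right (by linarith), max_eq_left (by linarith)]


lemma winding_eq {f₁ f₂ L₁ L₂ : ℝ → ℂ}
    (hn1 : ∀ x, ‖f₁ x‖ = 1) (hn2 : ∀ x, ‖f₂ x‖ = 1)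
    (hL1c : Continuous L₁) (hL2c : Continuous L₂)
    (hL1 : ∀ x, Complex.exp (L₁ x) = f₁ x) (hL2 : ∀ x, Complex.exp (L₂ x) = f₂ x)
    (hclose : ∀ x, ‖f₁ x - f₂ x‖ < 1)
    (hloop1 : f₁ 1 = f₁ 0) (hloop2 : f₂ 1 = f₂ 0) :
    L₁ 1 - L₁ 0 = L₂ 1 - L₂ 0 := by
  have h1c : Continuous f₁ := by
    have : f₁ = fun x => Complex.exp (L₁ x) := funext fun x => (hL1 x).symm
    rw [this]; exact Complex.continuous_exp.comp hL1c
  have h2c : Continuous f₂ := by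
    have : f₂ = fun x => Complex.exp (L₂ x) := funext fun x => (hL2 x).symm
    rw [this]; exact Complex.continuous_exp.comp hL2c
  have hratio := fun x => ratio_slit (hn1 x) (hn2 x) (hclose x)
  have hf20 : ∀ x, f₂ x ≠ 0 := fun x => (hratio x).2.2
  have hf10 : ∀ x, f₁ x ≠ 0 := fun x hx => by
    have := hn1 x; rw [hx] at this; simp at this
  set d : ℝ → ℂ := fun x => L₁ x - L₂ x - Complex.log (f₁ x / f₂ x) with hd
  have hdc : Continuous d := by
    refine (hL1c.sub hL2c).sub ?_
    have hq : Continuous fun x => f₁ x / f₂ x := h1c.div h2c hf20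
    rw [continuous_iff_continuousAt]
    intro x
    exact ContinuousAt.clog hq.continuousAt (hratio x).1
  have hede : ∀ x ∈ Set.uIcc (0:ℝ) 1, Complex.exp (d x) = 1 := by
    intro x _
    rw [hd]
    simp only
    rw [Complex.exp_sub, Complex.exp_sub, hL1, hL2,
      Complex.exp_log (div_ne_zero (hf10 x) (hf20 x))]
    exact div_self (div_ne_zero (hf10 x) (hf20 x))
  have h := const_of_exp_const hdc hede
  have h' : L₁ 0 - L₂ 0 - Complex.log (f₁ 0 / f₂ 0) =
      L₁ 1 - L₂ 1 - Complex.log (f₁ 1 / f₂ 1) := h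
  rw [hloop1, hloop2] at h'
  linear_combination -h'

lemma classical_contradiction
    {h : AddCircle (1:ℝ) → ℂ} {g : AddCircle (1:ℝ) × Set.Icc (0:ℝ) 1 → ℂ}
    (hhc : Continuous h) (hgc : Continuous g)
    (hhn : ∀ p, ‖h p‖ = 1) (hgn : ∀ k, ‖g k‖ = 1)
    (hodd : ∀ p, h (p + ((1/2 : ℝ) : AddCircle (1:ℝ))) = - h p)
    (hg0 : ∀ p, g (p, ⟨0, by norm_num⟩) = (h p)^2)
    (hg1 : ∀ p q, g (p, ⟨1, by norm_num⟩) = g (q, ⟨1, by norm_num⟩)) : False := by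
  haveI : Fact ((0:ℝ) < 1) := ⟨one_pos⟩
  have hh0 : ∀ p, h p ≠ 0 := fun p hp => by have := hhn p; rw [hp] at this; simp at this
  have hg0' : ∀ k, g k ≠ 0 := fun k hk => by have := hgn k; rw [hk] at this; simp at this
  have hcq : Continuous (fun x : ℝ => ((x : AddCircle (1:ℝ)))) := AddCircle.continuous_mk' 1
  set f : ℝ → ℂ := fun x => h ((proj x : ℝ) : AddCircle (1:ℝ)) with hf
  have hproj : Continuous proj := by
    unfold proj
    exact continuous_const.max (continuous_const.min continuous_id)
  have hfc : Continuous f := hhc.comp (hcq.comp hproj)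
  have hfn : ∀ x, ‖f x‖ = 1 := fun x => hhn _
  have hfcl : ∀ x, f x = f (proj x) := by
    intro x
    simp only [hf, proj_idem]
  obtain ⟨L, hLc, hLe⟩ := lift_exists hfc hfn hfcl
  set d : ℝ → ℂ := fun x => L (x + 1/2) - L x with hd
  have hdc : Continuous d := (hLc.comp (continuous_id.add continuous_const)).sub hLc
  have hconst : ∀ x ∈ Set.uIcc (0:ℝ) (1/2), Complex.exp (d x) = -1 := by
    intro x hx
    rw [Set.uIcc_of_le (by norm_num : (0:ℝ) ≤ 1/2)] at hx
    have hx1 : proj x = x := proj_of_mem ⟨hx.1, le_trans hx.2 (by norm_num)⟩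
    have hx2 : proj (x + 1/2) = x + 1/2 := proj_of_mem ⟨by linarith [hx.1], by linarith [hx.2]⟩
    rw [hd]
    simp only
    rw [Complex.exp_sub, hLe, hLe, hf]
    simp only [hx1, hx2]
    have : ((x + 1/2 : ℝ) : AddCircle (1:ℝ)) = ((x : ℝ) : AddCircle (1:ℝ)) + ((1/2 : ℝ) : AddCircle (1:ℝ)) := by
      push_cast
      rfl
    rw [this, hodd]
    rw [neg_div, div_self (hh0 _)]
  have hd0 : d 0 = d (1/2) := const_of_exp_const hdc hconst
  obtain ⟨m, hm⟩ : ∃ m : ℤ, d 0 = Real.pi * I + m * (2 * Real.pi * I) := by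
    have h1 : Complex.exp (d 0) = Complex.exp (Real.pi * I) := by
      rw [Complex.exp_pi_mul_I]
      exact hconst 0 Set.left_mem_uIcc
    exact Complex.exp_eq_exp_iff_exists_int.mp h1
  have hW : L 1 - L 0 = 2 * d 0 := by
    have e1 : d (1/2) + d 0 = L 1 - L 0 := by
      rw [hd]
      simp only
      norm_num
    rw [← e1, hd0]
    ring
  -- homotopy chain
  obtain ⟨δ, hδ0, hδ⟩ := Metric.uniformContinuous_iff.mp
    (CompactSpace.uniformContinuous_of_continuous hgc) 1 one_pos
  obtain ⟨M, hM⟩ := exists_nat_one_div_lt hδ0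
  set Nn : ℕ := M + 1 with hNn
  have hNpos : (0:ℝ) < Nn := by rw [hNn]; push_cast; positivity
  have hNR : (1:ℝ)/Nn < δ := by rw [hNn]; push_cast; exact hM
  set τ : ℕ → Set.Icc (0:ℝ) 1 := fun j =>
    ⟨min 1 ((j:ℝ)/Nn), ⟨le_min zero_le_one (by positivity), min_le_left _ _⟩⟩ with hτ
  set G : ℕ → ℝ → ℂ := fun j x => g (((proj x : ℝ) : AddCircle (1:ℝ)), τ j) with hG
  have hGc : ∀ j, Continuous (G j) := by
    intro j
    exact hgc.comp (Continuous.prodMk (hcq.comp hproj) continuous_const)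
  have hGn : ∀ j x, ‖G j x‖ = 1 := fun j x => hgn _
  have hGcl : ∀ j x, G j x = G j (proj x) := by
    intro j x
    simp only [hG, proj_idem]
  have hGloop : ∀ j, G j 1 = G j 0 := by
    intro j
    simp only [hG]
    congr 2
    rw [proj_of_mem ⟨zero_le_one, le_refl 1⟩, proj_of_mem ⟨le_refl 0, zero_le_one⟩]
    have h1 : ((1 : ℝ) : AddCircle (1:ℝ)) = 0 := AddCircle.coe_period 1
    have h0 : ((0 : ℝ) : AddCircle (1:ℝ)) = 0 := by
      norm_num
    rw [h1, h0]
  choose ℓ hℓc hℓe using fun j => lift_exists (hGc j) (hGn j) (hGcl j)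
  have hGclose : ∀ j x, ‖G (j+1) x - G j x‖ < 1 := by
    intro j x
    have hdist : dist ((((proj x : ℝ) : AddCircle (1:ℝ)), τ (j+1)))
        ((((proj x : ℝ) : AddCircle (1:ℝ)), τ j)) < δ := by
      rw [Prod.dist_eq]
      refine max_lt (by simpa using hδ0) ?_
      rw [Subtype.dist_eq]
      simp only [hτ]
      rw [Real.dist_eq]
      have hle : |min 1 (((j:ℕ)+1:ℝ)/Nn) - min 1 ((j:ℝ)/Nn)| ≤ |(((j:ℕ)+1:ℝ))/Nn - (j:ℝ)/Nn| := by
        refine le_trans (abs_min_sub_min_le_max _ _ _ _) ?_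
        simp only [sub_self, abs_zero]
        exact max_le (abs_nonneg _) (le_refl _)
      have heq : |(((j:ℕ)+1:ℝ))/Nn - (j:ℝ)/Nn| = 1/Nn := by
        rw [div_sub_div_same, show ((j:ℕ):ℝ) + 1 - (j:ℕ) = 1 by ring, abs_of_pos (by positivity)]
      calc |min 1 (((j+1:ℕ):ℝ)/Nn) - min 1 ((j:ℝ)/Nn)|
          = |min 1 (((j:ℕ)+1:ℝ)/Nn) - min 1 ((j:ℝ)/Nn)| := by push_cast; ring_nf
        _ ≤ 1/Nn := hle.trans heq.le
        _ < δ := hNR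
    have := hδ hdist
    rw [dist_eq_norm] at this
    exact this
  have hchain : ∀ j, ℓ j 1 - ℓ j 0 = ℓ 0 1 - ℓ 0 0 := by
    intro j
    induction j with
    | zero => rfl
    | succ j ih =>
      rw [← ih]
      exact winding_eq (hGn (j+1)) (hGn j) (hℓc (j+1)) (hℓc j) (hℓe (j+1)) (hℓe j)
        (hGclose j) (hGloop (j+1)) (hGloop j)
  -- start
  have hτ0 : τ 0 = ⟨0, by norm_num⟩ := by
    simp only [hτ]
    norm_num
  have hG0 : ∀ x, G 0 x = f x ^ 2 := by
    intro x
    simp only [hG, hτ0, hf]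
    rw [hg0]
  have hstart : ℓ 0 1 - ℓ 0 0 = (L 1 + L 1) - (L 0 + L 0) := by
    refine winding_eq (f₂ := fun x => f x ^ 2) (hGn 0) (fun x => ?_) (hℓc 0)
      (hLc.add hLc) (hℓe 0) (fun x => ?_) (fun x => ?_) (hGloop 0) ?_
    · rw [norm_pow, hfn]; norm_num
    · rw [Pi.add_apply, Complex.exp_add, hLe]; ring
    · rw [hG0]; simp
    · have : f 1 = f 0 := by
        simp only [hf]
        congr 1
        rw [proj_of_mem ⟨zero_le_one, le_refl 1⟩, proj_of_mem ⟨le_refl 0, zero_le_one⟩,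
          AddCircle.coe_period 1]
        norm_num
      simp only [this]
  -- end
  have hτN : τ Nn = ⟨1, by norm_num⟩ := by
    simp only [hτ]
    congr 1
    rw [div_self (ne_of_gt hNpos), min_self]
  have hGN : ∀ x, G Nn x = G Nn 0 := by
    intro x
    simp only [hG, hτN]
    exact hg1 _ _
  have hendc : G Nn 0 ≠ 0 := hg0' _
  have hend : ℓ Nn 1 - ℓ Nn 0 = 0 := by
    have := winding_eq (hGn Nn) (fun _ => hGn Nn 0) (hℓc Nn) (continuous_const :
        Continuous fun _ : ℝ => Complex.log (G Nn 0)) (hℓe Nn)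
      (fun _ => Complex.exp_log hendc) (fun x => by rw [hGN x]; simp)
      (hGloop Nn) rfl
    rw [this]
    ring
  have hzero : ((2:ℂ)) * (L 1 - L 0) = 0 := by
    have h1 : ℓ Nn 1 - ℓ Nn 0 = ℓ 0 1 - ℓ 0 0 := hchain Nn
    rw [hend, hstart] at h1
    linear_combination -h1
  rw [hW, hm] at hzero
  have hπ : (Real.pi : ℂ) ≠ 0 := by
    exact_mod_cast Real.pi_ne_zero
  have hfin : ((4*(2*m+1) : ℤ) : ℂ) * (Real.pi * I) = 0 := by
    push_cast
    linear_combination hzero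
  have : ((4*(2*m+1) : ℤ) : ℂ) = 0 := by
    rcases mul_eq_zero.mp hfin with h | h
    · exact h
    · rcases mul_eq_zero.mp h with h' | h'
      · exact absurd h' hπ
      · exact absurd h' I_ne_zero
  have : (4*(2*m+1) : ℤ) = 0 := by exact_mod_cast this
  omega


/-! ### Operator-algebraic part -/

open scoped Matrix.Norms.L2Operator
open Matrix

abbrev M2 : Type := Matrix (Fin 2) (Fin 2) ℂ

noncomputable instance : CStarAlgebra M2 := { }

instance : Fact ((0:ℝ) < 1) := ⟨one_pos⟩

abbrev KK : Type := AddCircle (1:ℝ) × (Set.Icc (0:ℝ) 1)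

/-- evaluation at a point as a star algebra homomorphism -/
def evalHom (k : KK) : C(KK, M2) →⋆ₐ[ℂ] M2 :=
  { toFun := fun f => f k
    map_one' := rfl
    map_mul' := fun _ _ => rfl
    map_zero' := rfl
    map_add' := fun _ _ => rfl
    commutes' := fun _ => rfl
    map_star' := fun _ => rfl }

lemma evalHom_apply (k : KK) (f : C(KK, M2)) : evalHom k f = f k := rfl

/-- scalars into 2×2 matrices -/
def scalarHom : ℂ →⋆ₐ[ℂ] M2 :=
  { toFun := fun c => algebraMap ℂ M2 c
    map_one' := map_one _
    map_mul' := map_mul _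
    map_zero' := map_zero _
    map_add' := map_add _
    commutes' := fun _ => rfl
    map_star' := fun c => by
      show algebraMap ℂ M2 (star c) = star (algebraMap ℂ M2 c)
      exact (algebraMap_star_comm c) }

lemma scalarHom_apply (c : ℂ) : scalarHom c = algebraMap ℂ M2 c := rfl

/-- real and imaginary coordinates on the circle -/
def ca (p : AddCircle (1:ℝ)) : ℝ := (AddCircle.toCircle p : ℂ).re
def cb (p : AddCircle (1:ℝ)) : ℝ := (AddCircle.toCircle p : ℂ).im

lemma ca_sq_add_cb_sq (p : AddCircle (1:ℝ)) : ca p ^ 2 + cb p ^ 2 = 1 := by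
  have h := Circle.normSq_coe (AddCircle.toCircle p)
  rw [Complex.normSq_apply] at h
  simpa [ca, cb, pow_two] using h

lemma ca_continuous : Continuous ca :=
  Complex.continuous_re.comp (continuous_induced_dom.comp AddCircle.continuous_toCircle)

lemma cb_continuous : Continuous cb :=
  Complex.continuous_im.comp (continuous_induced_dom.comp AddCircle.continuous_toCircle)

lemma toCircle_antipode (p : AddCircle (1:ℝ)) :
    (AddCircle.toCircle (p + ((1/2:ℝ) : AddCircle (1:ℝ))) : ℂ) = - AddCircle.toCircle p := by
  rw [AddCircle.toCircle_add, Circle.coe_mul]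
  have h1 : (AddCircle.toCircle (((1/2:ℝ) : AddCircle (1:ℝ)))) = Circle.exp Real.pi := by
    rw [AddCircle.toCircle_apply_mk]
    congr 1
    ring
  rw [h1]
  have h2 : (Circle.exp Real.pi : ℂ) = -1 := by
    rw [Circle.coe_exp, Complex.exp_pi_mul_I]
  rw [h2]
  ring

lemma ca_antipode (p : AddCircle (1:ℝ)) : ca (p + ((1/2:ℝ) : AddCircle (1:ℝ))) = - ca p := by
  unfold ca
  rw [toCircle_antipode p, Complex.neg_re]

lemma cb_antipode (p : AddCircle (1:ℝ)) : cb (p + ((1/2:ℝ) : AddCircle (1:ℝ))) = - cb p := by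
  unfold cb
  rw [toCircle_antipode p, Complex.neg_im]

/-- homotopy coefficients -/
def Af (t : ℝ) : ℝ := Real.cos (Real.pi * min t (1/2))
def Bf (t : ℝ) : ℝ := Real.sin (Real.pi * t)
def Cf (t : ℝ) : ℝ := - Real.cos (Real.pi * max t (1/2))

lemma Af_continuous : Continuous Af :=
  Real.continuous_cos.comp (continuous_const.mul (continuous_id.min continuous_const))
lemma Bf_continuous : Continuous Bf :=
  Real.continuous_sin.comp (continuous_const.mul continuous_id)
lemma Cf_continuous : Continuous Cf :=
  (Real.continuous_cos.comp (continuous_const.mul (continuous_id.max continuous_const))).neg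

lemma ABC_sq {t : ℝ} : Af t ^ 2 + Bf t ^ 2 + Cf t ^ 2 = 1 := by
  rcases le_total t (1/2) with h | h
  · have hmin : min t (1/2) = t := min_eq_left h
    have hmax : max t (1/2) = 1/2 := max_eq_right h
    rw [Af, Bf, Cf, hmin, hmax]
    rw [show Real.pi * (1/2) = Real.pi/2 by ring, Real.cos_pi_div_two]
    have := Real.sin_sq_add_cos_sq (Real.pi * t)
    nlinarith [this]
  · have hmin : min t (1/2) = 1/2 := min_eq_right h
    have hmax : max t (1/2) = t := max_eq_left h
    rw [Af, Bf, Cf, hmin, hmax]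
    rw [show Real.pi * (1/2) = Real.pi/2 by ring, Real.cos_pi_div_two]
    have := Real.sin_sq_add_cos_sq (Real.pi * t)
    nlinarith [this]

lemma ABC_ac (t : ℝ) : Af t * Cf t = 0 := by
  rcases le_total t (1/2) with h | h
  · have hmax : max t (1/2) = 1/2 := max_eq_right h
    rw [Cf, hmax, show Real.pi * (1/2) = Real.pi/2 by ring, Real.cos_pi_div_two]
    ring
  · have hmin : min t (1/2) = 1/2 := min_eq_right h
    rw [Af, hmin, show Real.pi * (1/2) = Real.pi/2 by ring, Real.cos_pi_div_two]
    ring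

lemma Af_zero : Af 0 = 1 := by
  rw [Af, min_eq_left (by norm_num : (0:ℝ) ≤ 1/2), mul_zero, Real.cos_zero]
lemma Bf_zero : Bf 0 = 0 := by rw [Bf, mul_zero, Real.sin_zero]
lemma Cf_zero : Cf 0 = 0 := by
  rw [Cf, max_eq_right (by norm_num : (0:ℝ) ≤ 1/2),
    show Real.pi * (1/2) = Real.pi/2 by ring, Real.cos_pi_div_two, neg_zero]
lemma Af_one : Af 1 = 0 := by
  rw [Af, min_eq_right (by norm_num : (1/2:ℝ) ≤ 1),
    show Real.pi * (1/2) = Real.pi/2 by ring, Real.cos_pi_div_two]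
lemma Bf_one : Bf 1 = 0 := by rw [Bf, mul_one, Real.sin_pi]
lemma Cf_one : Cf 1 = 1 := by
  rw [Cf, max_eq_left (by norm_num : (1/2:ℝ) ≤ 1), mul_one, Real.cos_pi, neg_neg]

/-- the homotopy of matrix spheres -/
def Y0fun (k : KK) : M2 :=
  !![(↑(Af k.2 * ca k.1 + Bf k.2 * cb k.1) : ℂ), (↑(Cf k.2) : ℂ);
     (↑(Cf k.2) : ℂ), (↑(Af k.2 * ca k.1 - Bf k.2 * cb k.1) : ℂ)]

def Y1fun (k : KK) : M2 :=
  !![(↑(Af k.2 * cb k.1 - Bf k.2 * ca k.1) : ℂ), 0;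
     0, (↑(Af k.2 * cb k.1 + Bf k.2 * ca k.1) : ℂ)]

lemma Y0fun_continuous : Continuous Y0fun := by
  apply continuous_matrix
  intro i j
  have h1 : Continuous fun k : KK => (Af (k.2 : ℝ)) := Af_continuous.comp
    (continuous_subtype_val.comp continuous_snd)
  have h2 : Continuous fun k : KK => (Bf (k.2 : ℝ)) := Bf_continuous.comp
    (continuous_subtype_val.comp continuous_snd)
  have h3 : Continuous fun k : KK => (Cf (k.2 : ℝ)) := Cf_continuous.comp
    (continuous_subtype_val.comp continuous_snd)
  have h4 : Continuous fun k : KK => ca k.1 := ca_continuous.comp continuous_fst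
  have h5 : Continuous fun k : KK => cb k.1 := cb_continuous.comp continuous_fst
  fin_cases i <;> fin_cases j <;>
    simp only [Y0fun, Matrix.cons_val', Matrix.cons_val_zero, Matrix.cons_val_one,
      Matrix.head_cons, Matrix.empty_val', Matrix.cons_val_fin_one, Matrix.head_fin_const,
      Matrix.of_apply] <;>
    exact Complex.continuous_ofReal.comp (by fun_prop)

lemma Y1fun_continuous : Continuous Y1fun := by
  apply continuous_matrix
  intro i j
  have h1 : Continuous fun k : KK => (Af (k.2 : ℝ)) := Af_continuous.comp
    (continuous_subtype_val.comp continuous_snd)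
  have h2 : Continuous fun k : KK => (Bf (k.2 : ℝ)) := Bf_continuous.comp
    (continuous_subtype_val.comp continuous_snd)
  have h4 : Continuous fun k : KK => ca k.1 := ca_continuous.comp continuous_fst
  have h5 : Continuous fun k : KK => cb k.1 := cb_continuous.comp continuous_fst
  fin_cases i <;> fin_cases j <;>
    simp only [Y1fun, Matrix.cons_val', Matrix.cons_val_zero, Matrix.cons_val_one,
      Matrix.head_cons, Matrix.empty_val', Matrix.cons_val_fin_one, Matrix.head_fin_const,
      Matrix.of_apply] <;>
    first
      | exact continuous_const
      | exact Complex.continuous_ofReal.comp (by fun_prop)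

lemma Y0fun_sa (k : KK) : star (Y0fun k) = Y0fun k := by
  show (Y0fun k)ᴴ = Y0fun k
  rw [Y0fun]
  ext i j
  fin_cases i <;> fin_cases j <;>
    simp [Matrix.conjTranspose_apply, Complex.conj_ofReal]

lemma Y1fun_sa (k : KK) : star (Y1fun k) = Y1fun k := by
  show (Y1fun k)ᴴ = Y1fun k
  rw [Y1fun]
  ext i j
  fin_cases i <;> fin_cases j <;>
    simp [Matrix.conjTranspose_apply, Complex.conj_ofReal]

lemma Y_sq (k : KK) : Y0fun k * Y0fun k + Y1fun k * Y1fun k = 1 := by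
  have hsq := ABC_sq (t := (k.2 : ℝ))
  have hac := ABC_ac (k.2 : ℝ)
  have hcirc := ca_sq_add_cb_sq k.1
  set A := Af (k.2 : ℝ) with hA
  set B := Bf (k.2 : ℝ) with hB
  set C := Cf (k.2 : ℝ) with hC
  set a := ca k.1 with ha
  set b := cb k.1 with hb
  rw [Y0fun, Y1fun, Matrix.mul_fin_two, Matrix.mul_fin_two, Matrix.one_fin_two]
  have e11 : (↑(A * a + B * b) : ℂ) * ↑(A * a + B * b) + ↑C * ↑C +
      ((↑(A * b - B * a) : ℂ) * ↑(A * b - B * a) + 0 * 0) = 1 := by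
    have : (A * a + B * b) * (A * a + B * b) + C * C +
        ((A * b - B * a) * (A * b - B * a) + 0 * 0) = 1 := by
      linear_combination (A^2 + B^2) * hcirc + hsq
    exact_mod_cast this
  have e12 : (↑(A * a + B * b) : ℂ) * ↑C + ↑C * ↑(A * a - B * b) +
      ((↑(A * b - B * a) : ℂ) * 0 + 0 * ↑(A * b + B * a)) = 0 := by
    have : (A * a + B * b) * C + C * (A * a - B * b) +
        ((A * b - B * a) * 0 + 0 * (A * b + B * a)) = 0 := by
      linear_combination (2 * a) * hac
    exact_mod_cast this
  have e21 : (↑C : ℂ) * ↑(A * a + B * b) + ↑(A * a - B * b) * ↑C +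
      (0 * (↑(A * b - B * a) : ℂ) + ↑(A * b + B * a) * 0) = 0 := by
    have : C * (A * a + B * b) + (A * a - B * b) * C +
        (0 * (A * b - B * a) + (A * b + B * a) * 0) = 0 := by
      linear_combination (2 * a) * hac
    exact_mod_cast this
  have e22 : (↑C : ℂ) * ↑C + ↑(A * a - B * b) * ↑(A * a - B * b) +
      (0 * 0 + (↑(A * b + B * a) : ℂ) * ↑(A * b + B * a)) = 1 := by
    have : C * C + (A * a - B * b) * (A * a - B * b) +
        (0 * 0 + (A * b + B * a) * (A * b + B * a)) = 1 := by
      linear_combination (A^2 + B^2) * hcirc + hsq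
    exact_mod_cast this
  ext i j
  fin_cases i <;> fin_cases j <;>
    simp only [Matrix.add_apply, Matrix.cons_val', Matrix.cons_val_zero, Matrix.cons_val_one,
      Matrix.head_cons, Matrix.empty_val', Matrix.cons_val_fin_one, Matrix.head_fin_const,
      Matrix.of_apply, Matrix.one_apply_eq]
  · exact e11
  · exact e12
  · exact e21
  · exact e22


lemma matrix_entry_simp : True := trivial

lemma Y0_at0 (p : AddCircle (1:ℝ)) :
    Y0fun (p, ⟨0, by norm_num⟩) = algebraMap ℂ M2 ((ca p : ℂ)) := by
  rw [Algebra.algebraMap_eq_smul_one]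
  ext i j
  have h2 : ((⟨0, by norm_num⟩ : Set.Icc (0:ℝ) 1) : ℝ) = 0 := rfl
  fin_cases i <;> fin_cases j <;>
    (simp only [Y0fun, Matrix.smul_apply, Matrix.one_apply, Matrix.cons_val',
      Matrix.cons_val_zero, Matrix.cons_val_one, Matrix.head_cons, Matrix.empty_val',
      Matrix.cons_val_fin_one, Matrix.head_fin_const, Matrix.of_apply, h2,
      Af_zero, Bf_zero, Cf_zero] <;>
    norm_num)

lemma Y1_at0 (p : AddCircle (1:ℝ)) :
    Y1fun (p, ⟨0, by norm_num⟩) = algebraMap ℂ M2 ((cb p : ℂ)) := by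
  rw [Algebra.algebraMap_eq_smul_one]
  ext i j
  have h2 : ((⟨0, by norm_num⟩ : Set.Icc (0:ℝ) 1) : ℝ) = 0 := rfl
  fin_cases i <;> fin_cases j <;>
    (simp only [Y1fun, Matrix.smul_apply, Matrix.one_apply, Matrix.cons_val',
      Matrix.cons_val_zero, Matrix.cons_val_one, Matrix.head_cons, Matrix.empty_val',
      Matrix.cons_val_fin_one, Matrix.head_fin_const, Matrix.of_apply, h2,
      Af_zero, Bf_zero, Cf_zero] <;>
    norm_num)

/-- the constant symmetry matrix -/
def P1 : M2 := !![0, 1; 1, 0]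

lemma P1_sa : _root_.IsSelfAdjoint P1 := by
  show P1ᴴ = P1
  ext i j
  fin_cases i <;> fin_cases j <;> simp [P1, Matrix.conjTranspose_apply]

lemma P1_sq : P1 ^ 2 + (0 : M2) ^ 2 = 1 := by
  rw [pow_two, pow_two, P1, Matrix.mul_fin_two, Matrix.one_fin_two]
  norm_num

lemma Y0_at1 (p : AddCircle (1:ℝ)) : Y0fun (p, ⟨1, by norm_num⟩) = P1 := by
  have h2 : ((⟨1, by norm_num⟩ : Set.Icc (0:ℝ) 1) : ℝ) = 1 := rfl
  ext i j
  fin_cases i <;> fin_cases j <;>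
    (simp only [Y0fun, P1, Matrix.cons_val', Matrix.cons_val_zero, Matrix.cons_val_one,
      Matrix.head_cons, Matrix.empty_val', Matrix.cons_val_fin_one, Matrix.head_fin_const,
      Matrix.of_apply, h2, Af_one, Bf_one, Cf_one] <;>
    norm_num)

lemma Y1_at1 (p : AddCircle (1:ℝ)) : Y1fun (p, ⟨1, by norm_num⟩) = 0 := by
  have h2 : ((⟨1, by norm_num⟩ : Set.Icc (0:ℝ) 1) : ℝ) = 1 := rfl
  ext i j
  fin_cases i <;> fin_cases j <;>
    (simp only [Y1fun, Matrix.cons_val', Matrix.cons_val_zero, Matrix.cons_val_one,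
      Matrix.head_cons, Matrix.empty_val', Matrix.cons_val_fin_one, Matrix.head_fin_const,
      Matrix.of_apply, h2, Af_one, Bf_one, Cf_one, Matrix.zero_apply] <;>
    norm_num)

lemma algebraMap_det (c : ℂ) : (algebraMap ℂ M2 c).det = c ^ 2 := by
  rw [Algebra.algebraMap_eq_smul_one, Matrix.det_smul, Matrix.det_one, Fintype.card_fin, mul_one]

lemma algebraMap_entry (c : ℂ) : (algebraMap ℂ M2 c) 0 0 = c := by
  rw [Algebra.algebraMap_eq_smul_one, Matrix.smul_apply, Matrix.one_apply_eq, smul_eq_mul, mul_one]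

lemma isSelfAdjoint_algebraMap_real (r : ℝ) :
    _root_.IsSelfAdjoint (algebraMap ℂ M2 ((r : ℂ))) := by
  show star (algebraMap ℂ M2 ((r : ℂ))) = algebraMap ℂ M2 ((r : ℂ))
  rw [← algebraMap_star_comm, Complex.star_def, Complex.conj_ofReal]

lemma sq_algebraMap_pair {x y : ℝ} (hxy : x ^ 2 + y ^ 2 = 1) :
    (algebraMap ℂ M2 ((x : ℂ))) ^ 2 + (algebraMap ℂ M2 ((y : ℂ))) ^ 2 = 1 := by
  rw [← map_pow, ← map_pow, ← map_add]
  have : ((x : ℂ)) ^ 2 + ((y : ℂ)) ^ 2 = 1 := by exact_mod_cast hxy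
  rw [this, _root_.map_one]


end BU

open BU in
/-- There is no `ℤ/2ℤ`-equivariant unital *-homomorphism from `C(S¹)`
(with the antipodal action, i.e. rotation by half a period on `S¹ = ℝ/ℤ`) to the free
sphere algebra `C(S¹₊)`; consequently the strong local-triviality dimension of the
antipodal `ℤ/2ℤ`-action on `C(S¹₊)` is at least `2` (since
`C(E₁^Δ ℤ/2ℤ) ≅ C(S¹)` equivariantly, the nonexistence of such a homomorphism is exactly
the statement `dim_SLT > 1`).

Here `S` is the universal unital C*-algebra generated by self-adjoint `x₀, x₁` with
`x₀² + x₁² = 1`, `σ` is the antipodal automorphism `xᵢ ↦ -xᵢ`, and the antipodal action on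
`C(S¹) = C(ℝ/ℤ, ℂ)` is precomposition with the translation `t ↦ t + 1/2`. -/
theorem no_equivariant_hom_circle_to_free_circle
    (S : Type) [CStarAlgebra S] (x₀ x₁ : S)
    (h₀ : IsSelfAdjoint x₀) (h₁ : IsSelfAdjoint x₁) (hsum : x₀ ^ 2 + x₁ ^ 2 = 1)
    (huniv : ∀ (D : Type) [CStarAlgebra D] (y₀ y₁ : D), IsSelfAdjoint y₀ →
      IsSelfAdjoint y₁ → y₀ ^ 2 + y₁ ^ 2 = 1 →
      ∃! φ : S →⋆ₐ[ℂ] D, φ x₀ = y₀ ∧ φ x₁ = y₁)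
    (σ : S ≃⋆ₐ[ℂ] S) (hσ₀ : σ x₀ = -x₀) (hσ₁ : σ x₁ = -x₁) :
    ¬∃ φ : C(AddCircle (1 : ℝ), ℂ) →⋆ₐ[ℂ] S,
      ∀ f : C(AddCircle (1 : ℝ), ℂ),
        φ (ContinuousMap.compStarAlgHom' ℂ ℂ
            ⟨fun t => t + ((1 / 2 : ℝ) : AddCircle (1 : ℝ)), by continuity⟩ f) =
          σ (φ f) := by
  rintro ⟨φ, hφ⟩
  -- the canonical unitary of `C(S¹)`
  have hzcont : Continuous fun p : AddCircle (1:ℝ) => (AddCircle.toCircle p : ℂ) :=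
    continuous_induced_dom.comp AddCircle.continuous_toCircle
  set z : C(AddCircle (1:ℝ), ℂ) := ⟨fun p => (AddCircle.toCircle p : ℂ), hzcont⟩ with hzdef
  set u : S := φ z with hu
  have hzz : star z * z = 1 := by
    ext p
    simp only [ContinuousMap.mul_apply, ContinuousMap.star_apply, ContinuousMap.one_apply,
      ContinuousMap.coe_mk, hzdef]
    rw [Complex.star_def, ← Complex.normSq_eq_conj_mul_self, Circle.normSq_coe,
      Complex.ofReal_one]
  have hzz' : z * star z = 1 := by
    ext p
    simp only [ContinuousMap.mul_apply, ContinuousMap.star_apply, ContinuousMap.one_apply,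
      ContinuousMap.coe_mk, hzdef]
    rw [Complex.star_def, Complex.mul_conj, Circle.normSq_coe, Complex.ofReal_one]
  have hus : star u * u = 1 := by rw [hu, ← map_star, ← map_mul, hzz, map_one]
  have huu : u * star u = 1 := by rw [hu, ← map_star, ← map_mul, hzz', map_one]
  have hσu : σ u = - u := by
    have h1 := hφ z
    have h2 : ContinuousMap.compStarAlgHom' ℂ ℂ
        ⟨fun t => t + ((1 / 2 : ℝ) : AddCircle (1 : ℝ)), by continuity⟩ z = - z := by
      ext p
      simp only [ContinuousMap.compStarAlgHom'_apply, ContinuousMap.comp_apply,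
        ContinuousMap.coe_mk, ContinuousMap.neg_apply, hzdef]
      exact toCircle_antipode p
    rw [h2, map_neg] at h1
    rw [hu]
    exact h1.symm
  -- characters of `S` indexed by the circle
  have hsa_real : ∀ r : ℝ, IsSelfAdjoint ((r : ℂ)) := fun r => by
    show star ((r : ℂ)) = ((r : ℂ))
    rw [Complex.star_def, Complex.conj_ofReal]
  have hchar : ∀ p, ∃ χ : S →⋆ₐ[ℂ] ℂ, χ x₀ = ((ca p : ℂ)) ∧ χ x₁ = ((cb p : ℂ)) := by
    intro p
    have hrel : ((ca p : ℂ)) ^ 2 + ((cb p : ℂ)) ^ 2 = 1 := by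
      exact_mod_cast ca_sq_add_cb_sq p
    exact (huniv ℂ _ _ (hsa_real _) (hsa_real _) hrel).exists
  choose χ hχ₀ hχ₁ using hchar
  -- the homotopy homomorphism into `C(KK, M2)`
  set Y₀ : C(KK, M2) := ⟨Y0fun, Y0fun_continuous⟩ with hY₀def
  set Y₁ : C(KK, M2) := ⟨Y1fun, Y1fun_continuous⟩ with hY₁def
  have hY₀sa : IsSelfAdjoint Y₀ := by
    show star Y₀ = Y₀
    refine ContinuousMap.ext fun k => ?_
    rw [ContinuousMap.star_apply]
    exact Y0fun_sa k
  have hY₁sa : IsSelfAdjoint Y₁ := by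
    show star Y₁ = Y₁
    refine ContinuousMap.ext fun k => ?_
    rw [ContinuousMap.star_apply]
    exact Y1fun_sa k
  have hYrel : Y₀ ^ 2 + Y₁ ^ 2 = 1 := by
    refine ContinuousMap.ext fun k => ?_
    rw [ContinuousMap.add_apply, ContinuousMap.pow_apply, ContinuousMap.pow_apply,
      ContinuousMap.one_apply, pow_two, pow_two]
    exact Y_sq k
  obtain ⟨Φ, ⟨hΦ₀, hΦ₁⟩, hΦu⟩ := huniv C(KK, M2) Y₀ Y₁ hY₀sa hY₁sa hYrel
  set U : C(KK, M2) := Φ u with hUdef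
  have hUunit : ∀ k, star (U k) * U k = 1 := by
    intro k
    have hst : star U * U = 1 := by rw [hUdef, ← map_star, ← map_mul, hus, map_one]
    calc star (U k) * U k = (star U * U) k := by
          rw [ContinuousMap.mul_apply, ContinuousMap.star_apply]
    _ = 1 := by rw [hst, ContinuousMap.one_apply]
  -- the two functions fed to the classical lemma
  set hh : AddCircle (1:ℝ) → ℂ := fun p => χ p u with hhdef
  set gg : KK → ℂ := fun k => (U k).det with ggdef
  -- gluing at t = 0
  have hglue0 : ∀ p, U (p, ⟨0, by norm_num⟩) = algebraMap ℂ M2 (hh p) := by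
    intro p
    obtain ⟨ψ, -, hψu⟩ := huniv M2 (algebraMap ℂ M2 ((ca p : ℂ)))
      (algebraMap ℂ M2 ((cb p : ℂ))) (isSelfAdjoint_algebraMap_real _)
      (isSelfAdjoint_algebraMap_real _) (sq_algebraMap_pair (ca_sq_add_cb_sq p))
    have h1 : (evalHom (p, ⟨0, by norm_num⟩)).comp Φ = ψ := by
      refine hψu _ ⟨?_, ?_⟩
      · rw [StarAlgHom.comp_apply, hΦ₀]
        show Y₀ (p, ⟨0, by norm_num⟩) = _
        rw [hY₀def]
        exact Y0_at0 p
      · rw [StarAlgHom.comp_apply, hΦ₁]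
        show Y₁ (p, ⟨0, by norm_num⟩) = _
        rw [hY₁def]
        exact Y1_at0 p
    have h2 : scalarHom.comp (χ p) = ψ := by
      refine hψu _ ⟨?_, ?_⟩
      · rw [StarAlgHom.comp_apply, hχ₀, scalarHom_apply]
      · rw [StarAlgHom.comp_apply, hχ₁, scalarHom_apply]
    have h3 : (evalHom (p, ⟨0, by norm_num⟩)).comp Φ = scalarHom.comp (χ p) := by
      rw [h1, h2]
    have h4 := congrArg (fun (ψ' : S →⋆ₐ[ℂ] M2) => ψ' u) h3
    simpa only [StarAlgHom.comp_apply, evalHom_apply, scalarHom_apply, hUdef, hhdef] using h4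
  -- gluing at t = 1
  have hglue1 : ∀ p q, U (p, ⟨1, by norm_num⟩) = U (q, ⟨1, by norm_num⟩) := by
    intro p q
    obtain ⟨ψ, -, hψu⟩ := huniv M2 P1 0 P1_sa (by show star (0:M2) = 0; simp) P1_sq
    have key : ∀ r, (evalHom (r, ⟨1, by norm_num⟩)).comp Φ = ψ := by
      intro r
      refine hψu _ ⟨?_, ?_⟩
      · rw [StarAlgHom.comp_apply, hΦ₀]
        show Y₀ (r, ⟨1, by norm_num⟩) = _
        rw [hY₀def]
        exact Y0_at1 r
      · rw [StarAlgHom.comp_apply, hΦ₁]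
        show Y₁ (r, ⟨1, by norm_num⟩) = _
        rw [hY₁def]
        exact Y1_at1 r
    have h1 := congrArg (fun (ψ' : S →⋆ₐ[ℂ] M2) => ψ' u) ((key p).trans (key q).symm)
    simpa only [StarAlgHom.comp_apply, evalHom_apply, hUdef] using h1
  -- oddness of hh
  have hχodd : ∀ p, χ (p + ((1/2:ℝ) : AddCircle (1:ℝ))) = (χ p).comp (σ : S →⋆ₐ[ℂ] S) := by
    intro p
    have hrel : ((ca (p + ((1/2:ℝ) : AddCircle (1:ℝ))) : ℂ)) ^ 2 +
        ((cb (p + ((1/2:ℝ) : AddCircle (1:ℝ))) : ℂ)) ^ 2 = 1 := by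
      exact_mod_cast ca_sq_add_cb_sq _
    obtain ⟨ψ, -, hψu⟩ := huniv ℂ _ _ (hsa_real (ca (p + ((1/2:ℝ) : AddCircle (1:ℝ)))))
      (hsa_real (cb (p + ((1/2:ℝ) : AddCircle (1:ℝ))))) hrel
    have h1 : χ (p + ((1/2:ℝ) : AddCircle (1:ℝ))) = ψ := hψu _ ⟨hχ₀ _, hχ₁ _⟩
    have h2 : (χ p).comp (σ : S →⋆ₐ[ℂ] S) = ψ := by
      refine hψu _ ⟨?_, ?_⟩
      · rw [StarAlgHom.comp_apply]
        show χ p (σ x₀) = _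
        rw [hσ₀, map_neg, hχ₀, ca_antipode]
        push_cast
        ring
      · rw [StarAlgHom.comp_apply]
        show χ p (σ x₁) = _
        rw [hσ₁, map_neg, hχ₁, cb_antipode]
        push_cast
        ring
    rw [h1, h2]
  have hhodd : ∀ p, hh (p + ((1/2:ℝ) : AddCircle (1:ℝ))) = - hh p := by
    intro p
    rw [hhdef]
    simp only
    rw [hχodd p, StarAlgHom.comp_apply]
    show χ p (σ u) = - χ p u
    rw [hσu, map_neg]
  -- norm one
  have hhnorm : ∀ p, ‖hh p‖ = 1 := by
    intro p
    have h1 : star (hh p) * hh p = 1 := by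
      rw [hhdef]
      simp only
      rw [← map_star, ← map_mul, hus, map_one]
    rw [Complex.star_def, ← Complex.normSq_eq_conj_mul_self] at h1
    have h2 : Complex.normSq (hh p) = 1 := by exact_mod_cast h1
    rw [Complex.norm_def, h2, Real.sqrt_one]
  have hggnorm : ∀ k, ‖gg k‖ = 1 := by
    intro k
    have h1 : star ((U k).det) * (U k).det = 1 := by
      rw [← Matrix.det_conjTranspose]
      show ((star (U k)).det) * (U k).det = 1
      rw [← Matrix.det_mul, hUunit k, Matrix.det_one]
    rw [Complex.star_def, ← Complex.normSq_eq_conj_mul_self] at h1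
    have h2 : Complex.normSq (gg k) = 1 := by exact_mod_cast h1
    rw [Complex.norm_def, h2, Real.sqrt_one]
  -- continuity of hh
  have hhc : Continuous hh := by
    have heq : hh = fun p => U (p, ⟨0, by norm_num⟩) 0 0 := by
      funext p
      rw [hglue0 p, algebraMap_entry]
    rw [heq]
    exact (U.continuous.comp (Continuous.prodMk continuous_id continuous_const)).matrix_elem 0 0
  have hggc : Continuous gg := U.continuous.matrix_det
  -- endpoints of gg
  have hgg0 : ∀ p, gg (p, ⟨0, by norm_num⟩) = hh p ^ 2 := by
    intro p
    rw [ggdef]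
    simp only
    rw [hglue0 p, algebraMap_det]
  have hgg1 : ∀ p q, gg (p, ⟨1, by norm_num⟩) = gg (q, ⟨1, by norm_num⟩) := by
    intro p q
    rw [ggdef]
    simp only
    rw [hglue1 p q]
  exact BU.classical_contradiction hhc hggc hhnorm hggnorm hhodd hgg0 hgg1
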